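/- For every integer n ≥ 1 there exists a unique K_c > 0 such that cosh((n+1)K_c) = 2^{n/2} (cosh K_c)^{n+1}; equivalently, x_0(K_c) = x_0^*(K_c), where x_0(K) = cosh((n+1)K)/cosh K and x_0^*(K) = 2^{-n/2}(e^K + e^{-K})^n are the principal edge Boltzmann factor and its dual on the Nishimori line. -/

import Mathlib

open Real

/-- The principal edge Boltzmann factor on the Nishimori line,
`x_0(K) = cosh((n+1)K) / cosh K`. -/
noncomputable def x0NL (n : ℕ) (K : ℝ) : ℝ := cosh (((n : ℝ) + 1) * K) / cosh K

/-- The principal dual edge Boltzmann factor on the Nishimori line,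
`x_0^*(K) = 2^{-n/2} (e^K + e^{-K})^n`. -/
noncomputable def x0StarNL (n : ℕ) (K : ℝ) : ℝ :=
  (2 : ℝ) ^ (-(n : ℝ) / 2) * (exp K + exp (-K)) ^ n

/-- Auxiliary log-ratio function. -/
noncomputable def Faux (n : ℕ) (K : ℝ) : ℝ :=
  Real.log (Real.cosh (((n : ℝ) + 1) * K)) - ((n : ℝ) + 1) * Real.log (Real.cosh K)

lemma Faux_hasDerivAt (n : ℕ) (x : ℝ) :
    HasDerivAt (Faux n)
      (Real.sinh (((n:ℝ)+1)*x) * ((n:ℝ)+1) / Real.cosh (((n:ℝ)+1)*x)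
        - ((n:ℝ)+1) * (Real.sinh x / Real.cosh x)) x := by
  set c : ℝ := (n:ℝ)+1 with hc
  have h1 : HasDerivAt (fun K : ℝ => c * K) c x := by
    simpa using (hasDerivAt_id x).const_mul c
  have h2 : HasDerivAt (fun K => Real.cosh (c*K)) (Real.sinh (c*x) * c) x :=
    (Real.hasDerivAt_cosh (c*x)).comp x h1
  have h3 : HasDerivAt (fun K => Real.log (Real.cosh (c*K)))
      (Real.sinh (c*x) * c / Real.cosh (c*x)) x :=
    h2.log (Real.cosh_pos _).ne'
  have h4 : HasDerivAt (fun K => Real.log (Real.cosh K)) (Real.sinh x / Real.cosh x) x :=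
    (Real.hasDerivAt_cosh x).log (Real.cosh_pos _).ne'
  exact h3.sub (h4.const_mul c)

lemma Faux_strictMono (n : ℕ) (hn : 1 ≤ n) : StrictMonoOn (Faux n) (Set.Ici 0) := by
  apply strictMonoOn_of_deriv_pos (convex_Ici 0)
  · exact fun x _ => (Faux_hasDerivAt n x).continuousAt.continuousWithinAt
  · intro x hx
    rw [interior_Ici, Set.mem_Ioi] at hx
    rw [(Faux_hasDerivAt n x).deriv]
    set c : ℝ := (n:ℝ)+1 with hc
    have hc1 : 1 < c := by
      have : (1:ℝ) ≤ (n:ℝ) := by exact_mod_cast hn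
      simp only [hc]; linarith
    have hcx : x < c * x := by nlinarith
    have hpos : 0 < Real.sinh (c*x) * Real.cosh x - Real.cosh (c*x) * Real.sinh x := by
      have := Real.sinh_pos_iff.mpr (show 0 < c*x - x by linarith)
      rw [Real.sinh_sub] at this
      linarith
    have h1 : Real.sinh x / Real.cosh x < Real.sinh (c*x) / Real.cosh (c*x) := by
      rw [div_lt_div_iff₀ (Real.cosh_pos _) (Real.cosh_pos _)]
      nlinarith
    have hc0 : (0:ℝ) < c := by linarith
    have : c * (Real.sinh x / Real.cosh x) < c * (Real.sinh (c*x) / Real.cosh (c*x)) :=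
      (mul_lt_mul_iff_right₀ hc0).mpr h1
    have heq : Real.sinh (c*x) * c / Real.cosh (c*x)
        = c * (Real.sinh (c*x) / Real.cosh (c*x)) := by ring
    rw [heq]
    linarith

lemma eq_iff_Faux (n : ℕ) (K : ℝ) :
    Real.cosh (((n:ℝ)+1)*K) = (2:ℝ) ^ ((n:ℝ)/2) * Real.cosh K ^ (n+1) ↔
    Faux n K = ((n:ℝ)/2) * Real.log 2 := by
  have hL : 0 < Real.cosh (((n:ℝ)+1)*K) := Real.cosh_pos _
  have hcK : 0 < Real.cosh K := Real.cosh_pos _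
  have hR : 0 < (2:ℝ) ^ ((n:ℝ)/2) * Real.cosh K ^ (n+1) := by positivity
  have hlogR : Real.log ((2:ℝ) ^ ((n:ℝ)/2) * Real.cosh K ^ (n+1))
      = ((n:ℝ)/2) * Real.log 2 + ((n:ℝ)+1) * Real.log (Real.cosh K) := by
    rw [Real.log_mul (by positivity) (by positivity), Real.log_rpow (by norm_num),
      Real.log_pow]
    push_cast
    ring
  constructor
  · intro h
    unfold Faux
    rw [h, hlogR]
    ring
  · intro h
    unfold Faux at h
    have hlog : Real.log (Real.cosh (((n:ℝ)+1)*K))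
        = Real.log ((2:ℝ) ^ ((n:ℝ)/2) * Real.cosh K ^ (n+1)) := by
      rw [hlogR]; linarith
    exact Real.log_injOn_pos (Set.mem_Ioi.mpr hL) (Set.mem_Ioi.mpr hR) hlog

lemma key_ineq (n : ℕ) (hn : 1 ≤ n) :
    (2:ℝ) ^ ((n:ℝ)/2) * Real.cosh 2 ^ (n+1) < Real.cosh (((n:ℝ)+1)*2) := by
  set s : ℝ := Real.sqrt 2 with hs
  have hs0 : 0 < s := Real.sqrt_pos.mpr (by norm_num)
  have hs2 : s ^ 2 = 2 := Real.sq_sqrt (by norm_num)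
  set b : ℝ := Real.exp 2 with hb
  set u : ℝ := Real.exp (-4) with hu
  have hb0 : 0 < b := Real.exp_pos 2
  have hu0 : 0 < u := Real.exp_pos _
  -- cosh 2 = b*(1+u)/2
  have hcosh2 : Real.cosh 2 = b * (1+u) / 2 := by
    have h2 : Real.exp 2 * Real.exp (-4) = Real.exp (-2) := by
      rw [← Real.exp_add]; norm_num
    rw [Real.cosh_eq, hb, hu]
    linear_combination -h2 / 2
  -- 2^(n/2) = s^n
  have hsn : (2:ℝ) ^ ((n:ℝ)/2) = s ^ n := by
    rw [show ((n:ℝ)/2) = (1/2:ℝ) * (n:ℕ) by push_cast; ring,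
      Real.rpow_mul (by norm_num : (0:ℝ) ≤ 2), Real.rpow_natCast,
      ← Real.rpow_natCast (2 ^ ((1:ℝ)/2)) n, Real.rpow_natCast]
    congr 1
    rw [hs, Real.sqrt_eq_rpow]
  -- u ≤ 1/16
  have h16 : (16:ℝ) ≤ Real.exp 4 := by
    have h1 : Real.exp 4 = (Real.exp 1) ^ 4 := by
      rw [← Real.exp_nat_mul]; norm_num
    have h2 : (2:ℝ) < Real.exp 1 := by
      have := Real.exp_one_gt_d9; linarith
    have h3 : (2:ℝ)^4 ≤ Real.exp 1 ^ 4 := pow_le_pow_left₀ (by norm_num) h2.le 4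
    rw [h1]; norm_num at h3 ⊢; linarith
  have hu16 : u ≤ 1/16 := by
    rw [hu, Real.exp_neg]
    rw [inv_le_comm₀ (by positivity) (by norm_num)]
    linarith
  -- core: (1+u)^(n+1) < s^n
  have hq : (289/256 : ℝ) < s := by nlinarith
  have core : (1+u) ^ (n+1) < s ^ n := by
    calc (1+u) ^ (n+1) ≤ (17/16 : ℝ) ^ (n+1) := by
          apply pow_le_pow_left₀ (by positivity)
          linarith
      _ ≤ (17/16 : ℝ) ^ (2*n) := by
          apply pow_le_pow_right₀ (by norm_num)
          omega
      _ = (289/256 : ℝ) ^ n := by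
          rw [pow_mul]; norm_num
      _ < s ^ n := by
          apply pow_lt_pow_left₀ hq (by norm_num)
          omega
  have hsnn : s ^ n * s ^ n = (2:ℝ) ^ n := by
    rw [← pow_add, show n + n = 2*n by ring, pow_mul, hs2]
  calc (2:ℝ) ^ ((n:ℝ)/2) * Real.cosh 2 ^ (n+1)
      = (s ^ n * (1+u) ^ (n+1)) * (b ^ (n+1) / 2 ^ (n+1)) := by
        rw [hsn, hcosh2, div_pow, mul_pow]; ring
    _ < (s ^ n * s ^ n) * (b ^ (n+1) / 2 ^ (n+1)) := by
        apply mul_lt_mul_of_pos_right _ (by positivity)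
        exact mul_lt_mul_of_pos_left core (by positivity)
    _ = b ^ (n+1) / 2 := by
        rw [hsnn, pow_succ 2 n]
        field_simp
    _ ≤ Real.cosh (((n:ℝ)+1)*2) := by
        rw [Real.cosh_eq]
        have hexp : Real.exp (((n:ℝ)+1)*2) = b ^ (n+1) := by
          rw [show ((n:ℝ)+1)*2 = ((n+1:ℕ):ℝ)*2 by push_cast; ring,
            Real.exp_nat_mul]
        rw [hexp]
        have := Real.exp_pos (-(((n:ℝ)+1)*2))
        linarith

lemma Faux_two_gt (n : ℕ) (hn : 1 ≤ n) : ((n:ℝ)/2) * Real.log 2 < Faux n 2 := by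
  have key := key_ineq n hn
  have hR : (0:ℝ) < (2:ℝ) ^ ((n:ℝ)/2) * Real.cosh 2 ^ (n+1) := by positivity
  have hlog := Real.log_lt_log hR key
  have hlogR : Real.log ((2:ℝ) ^ ((n:ℝ)/2) * Real.cosh 2 ^ (n+1))
      = ((n:ℝ)/2) * Real.log 2 + ((n:ℝ)+1) * Real.log (Real.cosh 2) := by
    rw [Real.log_mul (by positivity) (by positivity), Real.log_rpow (by norm_num),
      Real.log_pow]
    push_cast
    ring
  rw [hlogR] at hlog
  unfold Faux
  linarith

/-- Conjecture 1 of the paper: for every `n ≥ 1` there is a unique `K_c > 0` with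
`cosh((n+1)K_c) = 2^{n/2} (cosh K_c)^{n+1}`; equivalently (for `K > 0`),
`x_0(K_c) = x_0^*(K_c)` on the Nishimori line. -/
theorem exists_unique_multicritical (n : ℕ) (hn : 1 ≤ n) :
    (∃! K : ℝ, 0 < K ∧
      cosh (((n : ℝ) + 1) * K) = (2 : ℝ) ^ ((n : ℝ) / 2) * (cosh K) ^ (n + 1)) ∧
    (∀ K : ℝ, 0 < K →
      (cosh (((n : ℝ) + 1) * K) = (2 : ℝ) ^ ((n : ℝ) / 2) * (cosh K) ^ (n + 1) ↔
        x0NL n K = x0StarNL n K)) := by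
  constructor
  · -- existence and uniqueness
    set t : ℝ := ((n:ℝ)/2) * Real.log 2 with ht
    have ht0 : 0 < t := by
      have hn1 : (1:ℝ) ≤ (n:ℝ) := by exact_mod_cast hn
      have := Real.log_pos (by norm_num : (1:ℝ) < 2)
      positivity
    have hF0 : Faux n 0 = 0 := by
      unfold Faux; simp
    have hmono := Faux_strictMono n hn
    have hcont : ContinuousOn (Faux n) (Set.Icc 0 2) :=
      fun x _ => (Faux_hasDerivAt n x).continuousAt.continuousWithinAt
    have hmem : t ∈ Set.Ioo (Faux n 0) (Faux n 2) := by
      rw [hF0]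
      exact ⟨ht0, Faux_two_gt n hn⟩
    have hsub := intermediate_value_Ioo (by norm_num : (0:ℝ) ≤ 2) hcont
    obtain ⟨K, hKmem, hKF⟩ := hsub hmem
    refine ⟨K, ⟨hKmem.1, (eq_iff_Faux n K).mpr hKF⟩, ?_⟩
    intro K' ⟨hK'0, hK'eq⟩
    have hK'F : Faux n K' = t := (eq_iff_Faux n K').mp hK'eq
    exact hmono.injOn (Set.mem_Ici.mpr hK'0.le) (Set.mem_Ici.mpr hKmem.1.le)
      (by rw [hK'F, hKF])
  · -- equivalence with x0 = x0*
    intro K hK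
    have hcK : 0 < Real.cosh K := Real.cosh_pos _
    have hstar : x0StarNL n K = (2:ℝ) ^ ((n:ℝ)/2) * Real.cosh K ^ n := by
      unfold x0StarNL
      have h1 : Real.exp K + Real.exp (-K) = 2 * Real.cosh K := by
        rw [Real.cosh_eq]; ring
      rw [h1, mul_pow, ← mul_assoc]
      congr 1
      rw [← Real.rpow_natCast 2 n, ← Real.rpow_add (by norm_num)]
      congr 1
      ring
    unfold x0NL
    rw [hstar, div_eq_iff hcK.ne']
    constructor
    · intro h
      rw [h, pow_succ]
      ring
    · intro h
      rw [h, pow_succ]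
      ring
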